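/- Let N be cyclic of order 2^e (e ≥ 2) with generator σ, and let a ≡ 1 (mod 4). Then in Hol(N), for any integer u, the order of (σ^u, φ_a) equals max{2^{e - v_2(u)}, ord(φ_a)}. -/

import Mathlib

/-- The holomorph `Hol(N) = N ⋊ Aut(N)`. -/
abbrev Hol (N : Type*) [Group N] : Type _ :=
  N ⋊[MonoidHom.id (MulAut N)] MulAut N

section AuxHol

lemma hol_aux_odd_two_pow_dvd {x : ℤ} (hx : Odd x) (t : ℕ) : (2:ℤ)^t ∣ x ↔ t = 0 := by
  constructor
  · intro h
    by_contra ht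
    have h2 : (2:ℤ) ∣ x := dvd_trans (dvd_pow_self 2 ht) h
    obtain ⟨n, rfl⟩ := hx
    omega
  · rintro rfl; simp

lemma hol_aux_dvd_mul_odd {x c : ℤ} (hc : Odd c) (t : ℕ) :
    (2:ℤ)^t ∣ x * c ↔ (2:ℤ)^t ∣ x := by
  constructor
  · intro h
    obtain ⟨n, rfl⟩ := hc
    have hcop2 : IsCoprime (2:ℤ) (2*n+1) := ⟨-n, 1, by ring⟩
    exact (hcop2.pow_left).dvd_of_dvd_mul_right h
  · exact fun h => h.mul_right c

lemma hol_aux_pow_sub_one_dvd (a : ℤ) (ha4 : (4:ℤ) ∣ a - 1) (i : ℕ) :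
    (4:ℤ) ∣ a ^ i - 1 := by
  have h := sub_dvd_pow_sub_pow a 1 i
  simpa using dvd_trans ha4 h

lemma hol_aux_geomS_mod (a : ℤ) (ha4 : (4:ℤ) ∣ a - 1) (k : ℕ) :
    (4:ℤ) ∣ (∑ i ∈ Finset.range k, a ^ i) - k := by
  have h : (∑ i ∈ Finset.range k, a ^ i) - k = ∑ i ∈ Finset.range k, (a ^ i - 1) := by
    rw [Finset.sum_sub_distrib]; simp
  rw [h]
  exact Finset.dvd_sum fun i _ => hol_aux_pow_sub_one_dvd a ha4 i

lemma hol_aux_geomS_dvd_iff (a : ℤ) (ha4 : (4:ℤ) ∣ a - 1) (k t : ℕ) :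
    (2:ℤ)^t ∣ (∑ i ∈ Finset.range k, a ^ i) ↔ (2:ℤ)^t ∣ (k:ℤ) := by
  induction k using Nat.strong_induction_on generalizing t with
  | _ k ih =>
  rcases Nat.eq_zero_or_pos k with rfl | hk
  · simp
  rcases Nat.even_or_odd k with ⟨m, hm⟩ | hodd
  · have hm1 : 0 < m := by omega
    subst hm
    have gm : (∑ i ∈ Finset.range m, a ^ i) * (a - 1) = a ^ m - 1 := geom_sum_mul a m
    have hS2 : (∑ i ∈ Finset.range (m + m), a ^ i)
        = (∑ i ∈ Finset.range m, a ^ i) * (1 + a ^ m) := by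
      rcases eq_or_ne a 1 with rfl | hane
      · simp; ring
      · have hne : a - 1 ≠ 0 := sub_ne_zero.mpr hane
        apply mul_right_cancel₀ hne
        rw [geom_sum_mul]
        linear_combination (-(1 + a ^ m)) * gm
    obtain ⟨c, hc⟩ := hol_aux_pow_sub_one_dvd a ha4 m
    have hw : (∑ i ∈ Finset.range (m + m), a ^ i)
        = (2 * (∑ i ∈ Finset.range m, a ^ i)) * (2 * c + 1) := by
      rw [hS2]
      have h1 : 1 + a ^ m = 2 * (2 * c + 1) := by linarith
      rw [h1]; ring
    rw [hw, hol_aux_dvd_mul_odd ⟨c, by ring⟩ t]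
    cases t with
    | zero => simp
    | succ s =>
      have hl : ((m + m : ℕ) : ℤ) = 2 * (m : ℤ) := by push_cast; ring
      rw [pow_succ, mul_comm ((2:ℤ)^s) 2, hl,
        mul_dvd_mul_iff_left (by norm_num : (2:ℤ) ≠ 0),
        mul_dvd_mul_iff_left (by norm_num : (2:ℤ) ≠ 0)]
      exact ih m (by omega) s
  · have hSodd : Odd (∑ i ∈ Finset.range k, a ^ i) := by
      obtain ⟨d, hd⟩ := hol_aux_geomS_mod a ha4 k
      obtain ⟨j, hj⟩ := hodd
      refine ⟨2*d + j, ?_⟩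
      have hkz : (k:ℤ) = 2*j + 1 := by exact_mod_cast hj
      linarith
    rw [hol_aux_odd_two_pow_dvd hSodd, hol_aux_odd_two_pow_dvd ((Int.odd_coe_nat k).mpr hodd)]

end AuxHol

/-- Let `N` be cyclic of order `2^e` (`e ≥ 2`) with generator `σ`,
and let `a ≡ 1 (mod 4)`. For any integer `u`, the order of `(σ^u, φ_a)` in
`Hol(N)` equals `max (2^{e - v_2(u)}) (ord φ_a)`, with the convention that
`2^{e - v_2(u)} = 1` when `2^e ∣ u`. -/
theorem hol_order_formula_two {N : Type*} [Group N] (e : ℕ) (he : 2 ≤ e)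
    (σ : N) (hgen : ∀ x : N, x ∈ Subgroup.zpowers σ) (hcard : Nat.card N = 2 ^ e)
    (a : ℤ) (ha : Int.ModEq 4 a 1)
    (φa : MulAut N) (hφa : φa σ = σ ^ a) (u : ℤ) :
    orderOf (⟨σ ^ u, φa⟩ : Hol N) =
      max (if (2 : ℤ) ^ e ∣ u then 1 else 2 ^ (e - padicValInt 2 u))
        (orderOf φa) := by
  have ha4 : (4:ℤ) ∣ a - 1 := by
    have h := ha.dvd
    omega
  have hσ : orderOf σ = 2 ^ e := by
    rw [orderOf_eq_card_of_forall_mem_zpowers hgen, hcard]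
  have hσz : ∀ t : ℤ, σ ^ t = 1 ↔ (2:ℤ)^e ∣ t := by
    intro t
    rw [← orderOf_dvd_iff_zpow_eq_one, hσ]
    push_cast
    rfl
  set S : ℕ → ℤ := fun k => ∑ i ∈ Finset.range k, a ^ i with hSdef
  -- automorphism powers on σ
  have hφpow : ∀ k : ℕ, (φa ^ k) σ = σ ^ (a ^ k) := by
    intro k
    induction k with
    | zero => simp
    | succ n ihn =>
      have : (φa ^ (n+1)) σ = (φa ^ n) (φa σ) := by
        rw [pow_succ]; rfl
      rw [this, hφa, map_zpow, ihn, ← zpow_mul, pow_succ, mul_comm]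
  -- an automorphism fixing σ is trivial
  have hext : ∀ ψ : MulAut N, ψ σ = σ → ψ = 1 := by
    intro ψ hψ
    ext x
    obtain ⟨m, rfl⟩ := hgen x
    rw [map_zpow, hψ]
    rfl
  -- φa^k = 1 iff 2^e ∣ a^k - 1
  have hφk : ∀ k : ℕ, φa ^ k = 1 ↔ (2:ℤ)^e ∣ a ^ k - 1 := by
    intro k
    constructor
    · intro h
      have : (φa ^ k) σ = σ := by rw [h]; rfl
      rw [hφpow] at this
      have h2 : σ ^ (a ^ k - 1) = 1 := by
        rw [zpow_sub, this, zpow_one, mul_inv_cancel]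
      exact (hσz _).mp h2
    · intro h
      apply hext
      rw [hφpow]
      have h2 : σ ^ (a ^ k - 1) = 1 := (hσz _).mpr h
      calc σ ^ (a ^ k) = σ ^ (a ^ k - 1) * σ ^ (1:ℤ) := by
              rw [← zpow_add]; ring_nf
        _ = σ := by rw [h2, one_mul, zpow_one]
  -- orderOf φa divides 2^e
  have hM2dvd : orderOf φa ∣ 2 ^ e := by
    apply orderOf_dvd_of_pow_eq_one
    rw [hφk]
    have h1 : (2:ℤ)^e ∣ S (2^e) := by
      rw [hol_aux_geomS_dvd_iff a ha4 (2^e) e]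
      push_cast
      rfl
    have h2 : S (2^e) * (a - 1) = a ^ (2^e) - 1 := geom_sum_mul a (2^e)
    rw [← h2]
    exact h1.mul_right _
  -- power formula in the holomorph
  have hgpow : ∀ k : ℕ, (⟨σ ^ u, φa⟩ : Hol N) ^ k = ⟨σ ^ (u * S k), φa ^ k⟩ := by
    intro k
    induction k with
    | zero =>
      apply SemidirectProduct.ext <;> simp [hSdef]
    | succ n ihn =>
      rw [pow_succ, ihn]
      apply SemidirectProduct.ext
      · show σ ^ (u * S n) * (φa ^ n) (σ ^ u) = σ ^ (u * S (n+1))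
        rw [map_zpow, hφpow, ← zpow_mul, ← zpow_add]
        congr 1
        show u * S n + a ^ n * u = u * S (n+1)
        have : S (n+1) = S n + a ^ n := by
          simp [hSdef, Finset.sum_range_succ]
        rw [this]; ring
      · show φa ^ n * φa = φa ^ (n+1)
        rw [pow_succ]
  -- characterization of g^k = 1
  have hiff : ∀ k : ℕ, (⟨σ ^ u, φa⟩ : Hol N) ^ k = 1 ↔
      ((2:ℤ)^e ∣ u * S k ∧ orderOf φa ∣ k) := by
    intro k
    rw [hgpow k]
    constructor
    · intro h
      have hl := congrArg SemidirectProduct.left h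
      have hr := congrArg SemidirectProduct.right h
      simp only [SemidirectProduct.one_left, SemidirectProduct.one_right] at hl hr
      exact ⟨(hσz _).mp hl, orderOf_dvd_iff_pow_eq_one.mpr hr⟩
    · rintro ⟨h1, h2⟩
      apply SemidirectProduct.ext
      · simpa using (hσz _).mpr h1
      · simpa using orderOf_dvd_iff_pow_eq_one.mp h2
  set M1 : ℕ := if (2 : ℤ) ^ e ∣ u then 1 else 2 ^ (e - padicValInt 2 u) with hM1def
  -- the left condition is M1 ∣ k
  have hM1 : ∀ k : ℕ, ((2:ℤ)^e ∣ u * S k) ↔ M1 ∣ k := by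
    intro k
    by_cases hdvd : (2:ℤ)^e ∣ u
    · simp only [hM1def, if_pos hdvd]
      exact ⟨fun _ => one_dvd k, fun _ => (hdvd.mul_right _)⟩
    · simp only [hM1def, if_neg hdvd]
      have hu0 : u ≠ 0 := by rintro rfl; exact hdvd (dvd_zero _)
      set v : ℕ := padicValInt 2 u with hvdef
      have hve : v < e := by
        by_contra hle
        exact hdvd (dvd_trans (pow_dvd_pow (2:ℤ) (le_of_not_gt hle)) (padicValInt_dvd u))
      obtain ⟨u', hu'⟩ := padicValInt_dvd (p := 2) u
      have hu'odd : Odd u' := by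
        rw [← Int.not_even_iff_odd]
        rintro ⟨w, hw⟩
        have : ((2:ℕ):ℤ) ^ (v + 1) ∣ u := ⟨w, by rw [hu', hw]; push_cast; ring⟩
        rcases (padicValInt_dvd_iff (v+1) u).mp this with h0 | hle
        · exact hu0 h0
        · omega
      have hsplit : (2:ℤ)^e = 2^v * 2^(e - v) := by
        rw [← pow_add]; congr 1; omega
      rw [hu']
      push_cast
      rw [hsplit, mul_assoc, mul_dvd_mul_iff_left (by positivity : (2:ℤ)^v ≠ 0),
        mul_comm u' (S k), hol_aux_dvd_mul_odd hu'odd, hol_aux_geomS_dvd_iff a ha4 k (e - v)]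
      constructor
      · intro h; exact_mod_cast h
      · intro h; exact_mod_cast h
  set M2 : ℕ := orderOf φa with hM2def
  -- the order equals lcm M1 M2
  have hfull : ∀ k : ℕ, (⟨σ ^ u, φa⟩ : Hol N) ^ k = 1 ↔ Nat.lcm M1 M2 ∣ k := by
    intro k
    rw [hiff k, hM1 k]
    constructor
    · rintro ⟨h1, h2⟩; exact Nat.lcm_dvd h1 h2
    · intro h
      exact ⟨dvd_trans (Nat.dvd_lcm_left _ _) h, dvd_trans (Nat.dvd_lcm_right _ _) h⟩
  have hord : orderOf (⟨σ ^ u, φa⟩ : Hol N) = Nat.lcm M1 M2 := by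
    apply Nat.dvd_antisymm
    · exact orderOf_dvd_of_pow_eq_one ((hfull _).mpr dvd_rfl)
    · exact (hfull _).mp (pow_orderOf_eq_one _)
  rw [hord]
  -- both M1 and M2 are powers of two, so lcm = max
  obtain ⟨s, hs⟩ : ∃ s, M1 = 2 ^ s := by
    by_cases hdvd : (2 : ℤ) ^ e ∣ u
    · exact ⟨0, by simp [hM1def, hdvd]⟩
    · exact ⟨e - padicValInt 2 u, by simp [hM1def, hdvd]⟩
  obtain ⟨t, -, ht⟩ := (Nat.dvd_prime_pow Nat.prime_two).mp hM2dvd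
  rw [hs, ht]
  rcases le_total s t with hst | hst
  · have hd : (2:ℕ) ^ s ∣ 2 ^ t := pow_dvd_pow 2 hst
    rw [Nat.dvd_antisymm (Nat.lcm_dvd hd dvd_rfl) (Nat.dvd_lcm_right _ _),
      max_eq_right (Nat.pow_le_pow_right (by norm_num) hst)]
  · have hd : (2:ℕ) ^ t ∣ 2 ^ s := pow_dvd_pow 2 hst
    rw [Nat.dvd_antisymm (Nat.lcm_dvd dvd_rfl hd) (Nat.dvd_lcm_left _ _),
      max_eq_left (Nat.pow_le_pow_right (by norm_num) hst)]
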